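/- There exists a surjective linear isometry U : ℓ₁ → ℓ₁ such that for every separable real Banach space E and every surjective linear isometry f : E → E, there exists a surjective continuous linear operator q : ℓ₁ → E with operator norm at most 1 satisfying f ∘ q = q ∘ U. -/

import Mathlib

open TopologicalSpace

/-- `ℓ₁` : the real Banach space of summable sequences. -/
noncomputable abbrev ellOne : Type := lp (fun _ : ℕ => ℝ) 1

lemma ellOne_summable (x : ellOne) : Summable fun n => ‖x n‖ := by
  have := (lp.memℓp x).summable (p := 1) (by norm_num)
  simpa using this

lemma ellOne_norm (x : ellOne) : ‖x‖ = ∑' n, ‖x n‖ := by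
  have := lp.norm_eq_tsum_rpow (p := 1) (by norm_num) x
  simpa using this

section SumCLM
variable {E : Type} [NormedAddCommGroup E] [NormedSpace ℝ E] [CompleteSpace E]

lemma summable_norm_smul_w (w : ℕ → E) (hw : ∀ n, ‖w n‖ ≤ 1) (x : ellOne) :
    Summable fun n => ‖x n • w n‖ := by
  apply Summable.of_nonneg_of_le (fun n => norm_nonneg _) _ (ellOne_summable x)
  intro n
  rw [norm_smul]
  calc ‖x n‖ * ‖w n‖ ≤ ‖x n‖ * 1 :=
        mul_le_mul_of_nonneg_left (hw n) (norm_nonneg _)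
    _ = ‖x n‖ := mul_one _

lemma summable_smul_w (w : ℕ → E) (hw : ∀ n, ‖w n‖ ≤ 1) (x : ellOne) :
    Summable fun n => x n • w n :=
  Summable.of_norm (summable_norm_smul_w w hw x)

noncomputable def sumCLM (w : ℕ → E) (hw : ∀ n, ‖w n‖ ≤ 1) : ellOne →L[ℝ] E :=
  LinearMap.mkContinuous
    { toFun := fun x => ∑' n, x n • w n
      map_add' := by
        intro x y
        rw [← Summable.tsum_add (summable_smul_w w hw x) (summable_smul_w w hw y)]
        exact tsum_congr fun n => by rw [lp.coeFn_add, Pi.add_apply, add_smul]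
      map_smul' := by
        intro c x
        rw [RingHom.id_apply, ← tsum_const_smul'' c]
        exact tsum_congr fun n => by rw [lp.coeFn_smul, Pi.smul_apply, smul_assoc] }
    1
    (by
      intro x
      simp only [LinearMap.coe_mk, AddHom.coe_mk, one_mul]
      calc ‖∑' n, x n • w n‖ ≤ ∑' n, ‖x n • w n‖ :=
            norm_tsum_le_tsum_norm (summable_norm_smul_w w hw x)
        _ ≤ ∑' n, ‖x n‖ := by
            apply Summable.tsum_le_tsum _ (summable_norm_smul_w w hw x) (ellOne_summable x)
            intro n
            rw [norm_smul]
            calc ‖x n‖ * ‖w n‖ ≤ ‖x n‖ * 1 :=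
                  mul_le_mul_of_nonneg_left (hw n) (norm_nonneg _)
              _ = ‖x n‖ := mul_one _
        _ = ‖x‖ := (ellOne_norm x).symm)

lemma sumCLM_apply (w : ℕ → E) (hw : ∀ n, ‖w n‖ ≤ 1) (x : ellOne) :
    sumCLM w hw x = ∑' n, x n • w n := rfl

lemma sumCLM_norm_le (w : ℕ → E) (hw : ∀ n, ‖w n‖ ≤ 1) : ‖sumCLM w hw‖ ≤ 1 :=
  LinearMap.mkContinuous_norm_le _ zero_le_one _

lemma sumCLM_single (w : ℕ → E) (hw : ∀ n, ‖w n‖ ≤ 1) (j : ℕ) :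
    sumCLM w hw (lp.single 1 j (1 : ℝ)) = w j := by
  rw [sumCLM_apply]
  rw [tsum_eq_single j]
  · rw [lp.single_apply_self, one_smul]
  · intro n hn
    rw [lp.single_apply_ne 1 j _ hn, zero_smul]

end SumCLM

set_option linter.unusedSectionVars false

section Surj
variable {E : Type} [NormedAddCommGroup E] [NormedSpace ℝ E] [CompleteSpace E]

lemma sumCLM_surjective (w : ℕ → E) (hw : ∀ n, ‖w n‖ ≤ 1)
    (hd : ∀ z : E, ‖z‖ ≤ 1 → ∀ ε > 0, ∃ n, ‖z - w n‖ < ε) :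
    Function.Surjective (sumCLM w hw) := by
  have key : ∀ z : E, ∃ n : ℕ, ‖z - ‖z‖ • w n‖ ≤ ‖z‖ / 2 := by
    intro z
    rcases eq_or_ne z 0 with h | h
    · exact ⟨0, by simp [h]⟩
    · have hz0 : ‖z‖ ≠ 0 := norm_ne_zero_iff.mpr h
      have hz : ‖(‖z‖⁻¹ • z)‖ ≤ 1 := by
        rw [norm_smul, norm_inv, norm_norm, inv_mul_cancel₀ hz0]
      obtain ⟨n, hn⟩ := hd _ hz (1 / 2) (by norm_num)
      refine ⟨n, ?_⟩
      have he : z - ‖z‖ • w n = ‖z‖ • (‖z‖⁻¹ • z - w n) := by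
        rw [smul_sub, smul_inv_smul₀ hz0]
      rw [he, norm_smul, norm_norm]
      have := mul_le_mul_of_nonneg_left hn.le (norm_nonneg z)
      linarith
  choose step hstep using key
  intro y
  set g : E → E := fun z => z - ‖z‖ • w (step z) with hg
  set ys : ℕ → E := fun i => g^[i] y with hys
  have hsucc : ∀ i, ys (i + 1) = ys i - ‖ys i‖ • w (step (ys i)) := by
    intro i
    simp only [hys, Function.iterate_succ_apply', hg]
  have hbound : ∀ i, ‖ys i‖ ≤ ‖y‖ / 2 ^ i := by
    intro i
    induction i with
    | zero => simp [hys]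
    | succ i ih =>
      rw [hsucc i]
      calc ‖ys i - ‖ys i‖ • w (step (ys i))‖ ≤ ‖ys i‖ / 2 := hstep (ys i)
        _ ≤ ‖y‖ / 2 ^ i / 2 := by linarith
        _ = ‖y‖ / 2 ^ (i + 1) := by ring
  set u : ℕ → ellOne := fun i => ‖ys i‖ • lp.single 1 (step (ys i)) (1 : ℝ) with hu
  have hnormu : ∀ i, ‖u i‖ ≤ ‖y‖ / 2 ^ i := by
    intro i
    rw [hu]
    have h1 : ‖lp.single (E := fun _ : ℕ => ℝ) 1 (step (ys i)) (1 : ℝ)‖ = 1 := by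
      have := lp.norm_single (E := fun _ : ℕ => ℝ) (p := 1) (by norm_num)
        (step (ys i)) (1 : ℝ)
      simpa using this
    rw [norm_smul, h1, mul_one, norm_norm]
    exact hbound i
  have hgeo : Summable fun i : ℕ => ‖y‖ / 2 ^ i := by
    have := (summable_geometric_two).mul_left ‖y‖
    refine this.congr fun i => ?_
    rw [one_div, inv_pow, div_eq_mul_inv]
  have hsu : Summable u :=
    Summable.of_norm (Summable.of_nonneg_of_le (fun i => norm_nonneg _) hnormu hgeo)
  refine ⟨∑' i, u i, ?_⟩
  rw [ContinuousLinearMap.map_tsum _ hsu]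
  have hterm : ∀ i, sumCLM w hw (u i) = ys i - ys (i + 1) := by
    intro i
    rw [hu]
    simp only [map_smul, sumCLM_single]
    rw [hsucc i]
    abel
  have hsum2 : Summable fun i => ys i - ys (i + 1) := by
    apply Summable.of_norm
    apply Summable.of_nonneg_of_le (fun i => norm_nonneg _) _ hgeo
    intro i
    rw [← hterm i, hu, map_smul, sumCLM_single, norm_smul, norm_norm]
    calc ‖ys i‖ * ‖w (step (ys i))‖ ≤ ‖ys i‖ * 1 :=
          mul_le_mul_of_nonneg_left (hw _) (norm_nonneg _)
      _ = ‖ys i‖ := mul_one _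
      _ ≤ ‖y‖ / 2 ^ i := hbound i
  have hys0 : Filter.Tendsto ys Filter.atTop (nhds 0) := by
    apply squeeze_zero_norm hbound
    have h2 : Filter.Tendsto (fun i : ℕ => ‖y‖ * (1 / 2 : ℝ) ^ i) Filter.atTop (nhds (‖y‖ * 0)) :=
      (tendsto_pow_atTop_nhds_zero_of_lt_one (by norm_num) (by norm_num)).const_mul ‖y‖
    rw [mul_zero] at h2
    convert h2 using 2 with i
    rw [div_eq_mul_inv, one_div, inv_pow]
  have hpartial : Filter.Tendsto (fun N => ∑ i ∈ Finset.range N, (ys i - ys (i + 1)))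
      Filter.atTop (nhds y) := by
    have : ∀ N, ∑ i ∈ Finset.range N, (ys i - ys (i + 1)) = y - ys N := by
      intro N
      rw [Finset.sum_range_sub' ys N]
      simp [hys]
    simp only [this]
    have := Filter.Tendsto.const_sub y hys0
    simpa using this
  have := tsum_congr (L := SummationFilter.unconditional ℕ) hterm
  rw [this]
  exact tendsto_nhds_unique hsum2.hasSum.tendsto_sum_nat hpartial

end Surj

section Perm

lemma permMemℓp (π : ℕ ≃ ℕ) (x : ellOne) : Memℓp (fun m => x (π m)) 1 := by
  apply memℓp_gen
  have : Summable fun m => ‖x (π m)‖ := π.summable_iff.2 (ellOne_summable x)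
  simpa using this

noncomputable def permLIE (π : ℕ ≃ ℕ) : ellOne ≃ₗᵢ[ℝ] ellOne where
  toLinearEquiv :=
    { toFun := fun x => ⟨fun m => x (π.symm m), permMemℓp π.symm x⟩
      invFun := fun x => ⟨fun m => x (π m), permMemℓp π x⟩
      map_add' := by
        intro x y
        apply Subtype.ext
        funext m
        simp only [lp.coeFn_add, Pi.add_apply]
      map_smul' := by
        intro c x
        apply Subtype.ext
        funext m
        simp only [lp.coeFn_smul, Pi.smul_apply, RingHom.id_apply]
      left_inv := by
        intro x
        apply Subtype.ext
        funext m
        simp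
      right_inv := by
        intro x
        apply Subtype.ext
        funext m
        simp }
  norm_map' := by
    intro x
    have h1 : ‖(⟨fun m => x (π.symm m), permMemℓp π.symm x⟩ : ellOne)‖
        = ∑' m, ‖x (π.symm m)‖ := by
      have := ellOne_norm (⟨fun m => x (π.symm m), permMemℓp π.symm x⟩ : ellOne)
      simpa using this
    show ‖(⟨fun m => x (π.symm m), permMemℓp π.symm x⟩ : ellOne)‖ = ‖x‖
    rw [h1, Equiv.tsum_eq π.symm (fun i => ‖x i‖), ellOne_norm x]

lemma permLIE_apply (π : ℕ ≃ ℕ) (x : ellOne) (m : ℕ) :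
    permLIE π x m = x (π.symm m) := rfl

end Perm

/-- There is a surjectively universal surjective linear isometry on `ℓ₁`: every surjective
linear isometry of a separable real Banach space lifts to it via a surjective nonexpansive
operator. -/
theorem exists_universal_linear_isometry :
    ∃ U : ellOne →L[ℝ] ellOne, Function.Surjective U ∧ (∀ x, ‖U x‖ = ‖x‖) ∧
      ∀ (E : Type) [NormedAddCommGroup E] [NormedSpace ℝ E] [CompleteSpace E]
        [SeparableSpace E] (f : E →L[ℝ] E),
        Function.Surjective f → (∀ y, ‖f y‖ = ‖y‖) →
        ∃ q : ellOne →L[ℝ] E, Function.Surjective q ∧ ‖q‖ ≤ 1 ∧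
          ∀ x : ellOne, f (q x) = q (U x) := by
  classical
  obtain ⟨σ⟩ : Nonempty (ℕ ≃ ℕ × ℤ) := ⟨(Denumerable.eqv (ℕ × ℤ)).symm⟩
  set τ : ℕ × ℤ ≃ ℕ × ℤ := Equiv.prodCongr (Equiv.refl ℕ) (Equiv.addRight (1 : ℤ)) with hτ
  set π : ℕ ≃ ℕ := σ.trans (τ.trans σ.symm) with hπ
  refine ⟨(permLIE π).toLinearIsometry.toContinuousLinearMap, ?_, ?_, ?_⟩
  · exact (permLIE π).surjective
  · exact fun x => (permLIE π).norm_map x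
  intro E _ _ _ _ f hsurj hiso
  set li : E →ₗᵢ[ℝ] E := ⟨(f : E →ₗ[ℝ] E), hiso⟩ with hli
  have hlisurj : Function.Surjective li := hsurj
  set F : E ≃ₗᵢ[ℝ] E := LinearIsometryEquiv.ofSurjective li hlisurj with hF
  have hFf : ∀ z, F z = f z := fun z =>
    congrFun (LinearIsometryEquiv.coe_ofSurjective li hlisurj) z
  -- dense sequence in the closed unit ball
  haveI : SecondCountableTopology E := UniformSpace.secondCountable_of_separable E
  haveI : Nonempty (Metric.closedBall (0 : E) 1) :=
    ⟨⟨0, Metric.mem_closedBall_self zero_le_one⟩⟩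
  obtain ⟨u, hu⟩ := exists_dense_seq (Metric.closedBall (0 : E) 1)
  set v : ℕ → E := fun n => (u n : E) with hv
  have hv1 : ∀ n, ‖v n‖ ≤ 1 := fun n => mem_closedBall_zero_iff.1 (u n).2
  have hvd : ∀ z : E, ‖z‖ ≤ 1 → ∀ ε > 0, ∃ n, ‖z - v n‖ < ε := by
    intro z hz ε hε
    obtain ⟨n, hn⟩ := Metric.denseRange_iff.1 hu ⟨z, mem_closedBall_zero_iff.2 hz⟩ ε hε
    refine ⟨n, ?_⟩
    rw [Subtype.dist_eq, dist_eq_norm] at hn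
    exact hn
  set w : ℕ → E := fun m => (F ^ (σ m).2) (v (σ m).1) with hw
  have hw1 : ∀ m, ‖w m‖ ≤ 1 := by
    intro m
    rw [hw]
    rw [LinearIsometryEquiv.norm_map]
    exact hv1 _
  have hwv : ∀ n, w (σ.symm (n, 0)) = v n := by
    intro n
    rw [hw]
    simp only [Equiv.apply_symm_apply, zpow_zero]
    rfl
  have hwd : ∀ z : E, ‖z‖ ≤ 1 → ∀ ε > 0, ∃ m, ‖z - w m‖ < ε := by
    intro z hz ε hε
    obtain ⟨n, hn⟩ := hvd z hz ε hε
    exact ⟨σ.symm (n, 0), by rwa [hwv]⟩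
  refine ⟨sumCLM w hw1, sumCLM_surjective w hw1 hwd, sumCLM_norm_le w hw1, ?_⟩
  intro x
  have hπσ : ∀ m, σ (π m) = ((σ m).1, (σ m).2 + 1) := by
    intro m
    rw [hπ]
    simp only [Equiv.trans_apply, Equiv.apply_symm_apply]
    rfl
  have hfw : ∀ m, f (w m) = w (π m) := by
    intro m
    have h1 : w (π m) = (F ^ ((σ m).2 + 1)) (v (σ m).1) := by
      rw [hw]
      simp only [hπσ m]
    rw [h1, add_comm, zpow_add, zpow_one]
    have : (F * F ^ (σ m).2) (v (σ m).1) = F ((F ^ (σ m).2) (v (σ m).1)) := rfl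
    rw [this, hFf]
  have hsx : Summable fun m => x m • w m := summable_smul_w w hw1 x
  have hUx : ∀ m, ((permLIE π).toLinearIsometry.toContinuousLinearMap x : ellOne) m
      = x (π.symm m) := fun m => rfl
  calc f (sumCLM w hw1 x) = ∑' m, x m • f (w m) := by
        rw [sumCLM_apply, ContinuousLinearMap.map_tsum f hsx]
        exact tsum_congr fun m => (f.map_smul _ _)
    _ = ∑' m, x m • w (π m) := tsum_congr fun m => by rw [hfw m]
    _ = ∑' m, x (π.symm m) • w m := by
        have := Equiv.tsum_eq π (fun m => x (π.symm m) • w m)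
        simp only [Equiv.symm_apply_apply] at this
        rw [← this]
    _ = sumCLM w hw1 ((permLIE π).toLinearIsometry.toContinuousLinearMap x) := by
        rw [sumCLM_apply]
        exact tsum_congr fun m => by rw [hUx m]
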